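/- Consider a finite-horizon MDP on X = {1,...,n}, A = {1,...,m} satisfying: (A1) r(x,a) nondecreasing in x; (A2) P_x(a) ≤_s P_{x+1}(a) for all x, a; (A5) terminal reward t nondecreasing; (A6) there is β(x,x',a) > 0 nondecreasing in a with r(x',a+1)-r(x',a) ≥ β(x,x',a)(r(x,a+1)-r(x,a)) for x' > x; (A7) there is α(x,x',a) > 0 nondecreasing in a with ∑_{j≥l}(P_{x',j}(a+1)-P_{x',j}(a)) ≥ α(x,x',a)·∑_{j≥l}(P_{x,j}(a+1)-P_{x,j}(a)) for all l and x' > x; (A8) one can take α = β. Then for every k the map x ↦ max argmax_a Q_k(x,a) is monotone nondecreasing, i.e., there exists an optimal policy μ*_k nondecreasing in x. -/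

import Mathlib

open Finset

lemma tel_sum (w : ℕ → ℝ) (n : ℕ) :
    ∑ l ∈ Icc 2 (n + 1), (w l - w (l - 1)) = w (n + 1) - w 1 := by
  induction n with
  | zero => simp
  | succ n ih =>
    rw [Finset.sum_Icc_succ_top (by omega), ih]
    simp

lemma abel_sum (n : ℕ) (c w : ℕ → ℝ) :
    ∑ j ∈ Icc 1 n, c j * w j
      = w 1 * (∑ j ∈ Icc 1 n, c j)
        + ∑ l ∈ Icc 2 n, (w l - w (l - 1)) * ∑ j ∈ Icc l n, c j := by
  induction n with
  | zero => simp
  | succ n ih =>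
    rw [Finset.sum_Icc_succ_top (by omega : 1 ≤ n + 1),
        Finset.sum_Icc_succ_top (by omega : 1 ≤ n + 1), ih]
    have h1 : ∀ l ∈ Icc 2 (n + 1), (w l - w (l - 1)) * ∑ j ∈ Icc l (n + 1), c j
        = (w l - w (l - 1)) * ∑ j ∈ Icc l n, c j + (w l - w (l - 1)) * c (n + 1) := by
      intro l hl
      rw [Finset.sum_Icc_succ_top (by simp at hl; omega)]
      ring
    rw [Finset.sum_congr rfl h1, Finset.sum_add_distrib, ← Finset.sum_mul, tel_sum]
    have h2 : ∑ l ∈ Icc 2 (n + 1), (w l - w (l - 1)) * ∑ j ∈ Icc l n, c j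
        = ∑ l ∈ Icc 2 n, (w l - w (l - 1)) * ∑ j ∈ Icc l n, c j := by
      rcases Nat.eq_zero_or_pos n with h | h
      · subst h; simp
      · rw [Finset.sum_Icc_succ_top (by omega)]
        simp [Icc_eq_empty_iff]
    rw [h2]; ring
lemma dom_sum (n : ℕ) (p q w : ℕ → ℝ)
    (hw : ∀ l, 2 ≤ l → l ≤ n → w (l - 1) ≤ w l)
    (hdom : ∀ l ∈ Icc 1 n, ∑ j ∈ Icc l n, p j ≤ ∑ j ∈ Icc l n, q j)
    (htot : ∑ j ∈ Icc 1 n, p j = ∑ j ∈ Icc 1 n, q j) :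
    ∑ j ∈ Icc 1 n, p j * w j ≤ ∑ j ∈ Icc 1 n, q j * w j := by
  rw [abel_sum, abel_sum, htot]
  refine add_le_add le_rfl (Finset.sum_le_sum ?_)
  intro l hl
  simp only [mem_Icc] at hl
  exact mul_le_mul_of_nonneg_left (hdom l (by simp; omega))
    (sub_nonneg.2 (hw l hl.1 hl.2))

lemma gamma_sum (n : ℕ) (c c' w : ℕ → ℝ) (g : ℝ)
    (hw : ∀ l, 2 ≤ l → l ≤ n → w (l - 1) ≤ w l)
    (h : ∀ l ∈ Icc 1 n, g * ∑ j ∈ Icc l n, c j ≤ ∑ j ∈ Icc l n, c' j)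
    (hc : ∑ j ∈ Icc 1 n, c j = 0) (hc' : ∑ j ∈ Icc 1 n, c' j = 0) :
    g * ∑ j ∈ Icc 1 n, c j * w j ≤ ∑ j ∈ Icc 1 n, c' j * w j := by
  rw [abel_sum n c, abel_sum n c', hc, hc']
  simp only [mul_zero, zero_add]
  rw [Finset.mul_sum]
  refine Finset.sum_le_sum ?_
  intro l hl
  simp only [mem_Icc] at hl
  have h1 := h l (by simp; omega)
  have h2 := sub_nonneg.2 (hw l hl.1 hl.2)
  nlinarith


/-- `a` is the largest maximizer of `f` over the action set `{1,...,m}`. -/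
def IsLargestArgmax (m : ℕ) (f : ℕ → ℝ) (a : ℕ) : Prop :=
  a ∈ Finset.Icc 1 m ∧ (∀ b ∈ Finset.Icc 1 m, f b ≤ f a) ∧
    ∀ b ∈ Finset.Icc 1 m, (∀ c ∈ Finset.Icc 1 m, f c ≤ f b) → b ≤ a

/-- Theorem 1(ii) of the paper: under (A1),(A2),(A5),(A6),(A7),(A8) the largest
maximizer of `Q_k(x,·)` is nondecreasing in `x` for every stage `k`. -/
theorem stmt7 (n m N : ℕ) (hn : 1 ≤ n) (hm : 1 ≤ m)
    (r : ℕ → ℕ → ℝ) (P : ℕ → ℕ → ℕ → ℝ) (t : ℕ → ℝ)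
    (hP0 : ∀ a ∈ Finset.Icc 1 m, ∀ x ∈ Finset.Icc 1 n, ∀ j ∈ Finset.Icc 1 n, 0 ≤ P a x j)
    (hP1 : ∀ a ∈ Finset.Icc 1 m, ∀ x ∈ Finset.Icc 1 n, (∑ j ∈ Finset.Icc 1 n, P a x j) = 1)
    -- (A1) rewards nondecreasing in the state
    (hA1 : ∀ a ∈ Finset.Icc 1 m, ∀ x ∈ Finset.Icc 1 n, ∀ x' ∈ Finset.Icc 1 n,
        x ≤ x' → r x a ≤ r x' a)
    -- (A2) first-order stochastic dominance of successive rows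
    (hA2 : ∀ a ∈ Finset.Icc 1 m, ∀ x, 1 ≤ x → x + 1 ≤ n → ∀ l ∈ Finset.Icc 1 n,
        (∑ j ∈ Finset.Icc l n, P a x j) ≤ ∑ j ∈ Finset.Icc l n, P a (x + 1) j)
    -- (A5) terminal reward nondecreasing
    (hA5 : ∀ x ∈ Finset.Icc 1 n, ∀ x' ∈ Finset.Icc 1 n, x ≤ x' → t x ≤ t x')
    -- (A6),(A7),(A8): a common multiplier γ = α = β, positive and nondecreasing in a
    (γ : ℕ → ℕ → ℕ → ℝ)
    (hγpos : ∀ x x' a, 0 < γ x x' a)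
    (hγmono : ∀ x x' a a', a ≤ a' → γ x x' a ≤ γ x x' a')
    (hA6 : ∀ x ∈ Finset.Icc 1 n, ∀ x' ∈ Finset.Icc 1 n, x < x' →
        ∀ a, 1 ≤ a → a + 1 ≤ m →
        γ x x' a * (r x (a + 1) - r x a) ≤ r x' (a + 1) - r x' a)
    (hA7 : ∀ x ∈ Finset.Icc 1 n, ∀ x' ∈ Finset.Icc 1 n, x < x' →
        ∀ a, 1 ≤ a → a + 1 ≤ m → ∀ l ∈ Finset.Icc 1 n,
        γ x x' a * ((∑ j ∈ Finset.Icc l n, P (a + 1) x j) - ∑ j ∈ Finset.Icc l n, P a x j) ≤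
          (∑ j ∈ Finset.Icc l n, P (a + 1) x' j) - ∑ j ∈ Finset.Icc l n, P a x' j)
    -- Bellman backward recursion
    (V : ℕ → ℕ → ℝ) (Q : ℕ → ℕ → ℕ → ℝ)
    (hVN : ∀ x, V N x = t x)
    (hQ : ∀ k < N, ∀ x a,
        Q k x a = r x a + ∑ j ∈ Finset.Icc 1 n, P a x j * V (k + 1) j)
    (hV : ∀ k < N, ∀ x, IsGreatest ((fun a => Q k x a) '' ↑(Finset.Icc 1 m)) (V k x)) :
    ∀ k < N, ∀ x ∈ Finset.Icc 1 n, ∀ x' ∈ Finset.Icc 1 n, x ≤ x' →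
      ∀ a a', IsLargestArgmax m (Q k x) a → IsLargestArgmax m (Q k x') a' → a ≤ a' := by
  -- V is nondecreasing in the state at every stage k ≤ N
  have hVmono : ∀ d k, k + d = N → ∀ x ∈ Finset.Icc 1 n, ∀ x' ∈ Finset.Icc 1 n,
      x ≤ x' → V k x ≤ V k x' := by
    intro d
    induction d with
    | zero =>
      intro k hk x hx x' hx' hxx'
      have : k = N := by omega
      subst this
      rw [hVN, hVN]
      exact hA5 x hx x' hx' hxx'
    | succ d ih =>
      intro k hk x hx x' hx' hxx'
      have hkN : k < N := by omega
      have ih' := ih (k + 1) (by omega)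
      have hw : ∀ l, 2 ≤ l → l ≤ n → V (k + 1) (l - 1) ≤ V (k + 1) l := by
        intro l h2 hln
        exact ih' (l - 1) (by simp; omega) l (by simp; omega) (by omega)
      -- one-step monotonicity of the expected continuation value
      have hstep : ∀ y, 1 ≤ y → y + 1 ≤ n → ∀ a ∈ Finset.Icc 1 m,
          ∑ j ∈ Finset.Icc 1 n, P a y j * V (k + 1) j
            ≤ ∑ j ∈ Finset.Icc 1 n, P a (y + 1) j * V (k + 1) j := by
        intro y hy hyn a ha
        refine dom_sum n _ _ _ hw (hA2 a ha y hy hyn) ?_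
        rw [hP1 a ha y (by simp; omega), hP1 a ha (y + 1) (by simp; omega)]
      simp only [Finset.mem_Icc] at hx hx'
      have hsum : ∀ a ∈ Finset.Icc 1 m,
          ∑ j ∈ Finset.Icc 1 n, P a x j * V (k + 1) j
            ≤ ∑ j ∈ Finset.Icc 1 n, P a x' j * V (k + 1) j := by
        intro a ha
        induction x' , hxx' using Nat.le_induction with
        | base => exact le_rfl
        | succ y hy ihy =>
          rcases Nat.lt_or_ge y n with h | h
          · exact le_trans (ihy ⟨by omega, by omega⟩)
              (hstep y (by omega) (by omega) a ha)
          · omega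
      obtain ⟨⟨a, ha, hQa⟩, -⟩ := hV k hkN x
      have haM : a ∈ Finset.Icc 1 m := ha
      calc V k x = Q k x a := hQa.symm
        _ ≤ Q k x' a := by
            rw [hQ k hkN, hQ k hkN]
            exact add_le_add
              (hA1 a haM x (by simp; omega) x' (by simp; omega) hxx')
              (hsum a haM)
        _ ≤ V k x' := (hV k hkN x').2 ⟨a, ha, rfl⟩
  -- key increment inequality
  have hinc : ∀ k < N, ∀ x ∈ Finset.Icc 1 n, ∀ x' ∈ Finset.Icc 1 n, x < x' →
      ∀ a, 1 ≤ a → a + 1 ≤ m →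
      γ x x' a * (Q k x (a + 1) - Q k x a) ≤ Q k x' (a + 1) - Q k x' a := by
    intro k hk x hx x' hx' hlt a ha ham
    have hw : ∀ l, 2 ≤ l → l ≤ n → V (k + 1) (l - 1) ≤ V (k + 1) l := by
      intro l h2 hln
      exact hVmono (N - (k + 1)) (k + 1) (by omega) (l - 1) (by simp; omega)
        l (by simp; omega) (by omega)
    have ha' : a ∈ Finset.Icc 1 m := by simp; omega
    have ha1 : a + 1 ∈ Finset.Icc 1 m := by simp; omega
    set w := V (k + 1) with hwdef
    have key := gamma_sum n (fun j => P (a + 1) x j - P a x j)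
      (fun j => P (a + 1) x' j - P a x' j) w (γ x x' a) hw
      (by
        intro l hl
        have := hA7 x hx x' hx' hlt a ha ham l hl
        simpa [Finset.sum_sub_distrib] using this)
      (by rw [Finset.sum_sub_distrib, hP1 (a + 1) ha1 x hx, hP1 a ha' x hx]; ring)
      (by rw [Finset.sum_sub_distrib, hP1 (a + 1) ha1 x' hx', hP1 a ha' x' hx']; ring)
    rw [hQ k hk, hQ k hk, hQ k hk, hQ k hk]
    have hsx : ∑ j ∈ Finset.Icc 1 n, (P (a + 1) x j - P a x j) * w j
        = (∑ j ∈ Finset.Icc 1 n, P (a + 1) x j * w j)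
          - ∑ j ∈ Finset.Icc 1 n, P a x j * w j := by
      rw [← Finset.sum_sub_distrib]; congr 1; ext j; ring
    have hsx' : ∑ j ∈ Finset.Icc 1 n, (P (a + 1) x' j - P a x' j) * w j
        = (∑ j ∈ Finset.Icc 1 n, P (a + 1) x' j * w j)
          - ∑ j ∈ Finset.Icc 1 n, P a x' j * w j := by
      rw [← Finset.sum_sub_distrib]; congr 1; ext j; ring
    rw [hsx, hsx'] at key
    have h6 := hA6 x hx x' hx' hlt a ha ham
    nlinarith [key, h6]
  -- conclude
  intro k hk x hx x' hx' hxx' a a' hA hA'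
  obtain ⟨haM, hamax, -⟩ := hA
  obtain ⟨ha'M, ha'max, ha'large⟩ := hA'
  rcases eq_or_lt_of_le hxx' with rfl | hlt
  · exact ha'large a haM hamax
  by_contra hcon
  push_neg at hcon  -- a' < a
  -- telescoping: Q k x' a ≥ Q k x' a'
  simp only [Finset.mem_Icc] at haM ha'M
  have main : ∀ d b, b + d = a → a' ≤ b →
      γ x x' b * (Q k x a - Q k x b) ≤ Q k x' a - Q k x' b := by
    intro d
    induction d with
    | zero =>
      intro b hb _
      have : b = a := by omega
      subst this; simp
    | succ d ihd =>
      intro b hb hab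
      have hb1 : 1 ≤ b := le_trans ha'M.1 hab
      have hbm : b + 1 ≤ m := by omega
      have h1 := hinc k hk x hx x' hx' hlt b hb1 hbm
      have h2 := ihd (b + 1) (by omega) (by omega)
      have h3 : γ x x' b ≤ γ x x' (b + 1) := hγmono x x' b (b + 1) (by omega)
      have h4 : Q k x (b + 1) ≤ Q k x a := hamax (b + 1) (by simp; omega)
      nlinarith [mul_le_mul_of_nonneg_right h3 (sub_nonneg.2 h4)]
  have hkey := main (a - a') a' (by omega) le_rfl
  have h5 : Q k x a' ≤ Q k x a := hamax a' (by simp; omega)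
  have h6 : 0 < γ x x' a' := hγpos x x' a'
  have h7 : Q k x' a' ≤ Q k x' a := by nlinarith
  have h8 : ∀ c ∈ Finset.Icc 1 m, Q k x' c ≤ Q k x' a := fun c hc =>
    le_trans (ha'max c hc) h7
  have := ha'large a (by simp; omega) h8
  omega
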